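/- arXiv:1706.03668 — 3 statements merged into one kernel-verified Lean document; each statement's English description precedes it below -/
import Mathlib

section
/- h₂(3) = 18: the smallest m such that for every (a,b) ∈ ℤ² with b − a even there exists q ∈ {1,...,m} with a+q and b+q both coprime to 30, is 18. -/
open Finset

/-- The i-th prime, 1-indexed: p 1 = 2. -/
noncomputable def nthPrime (i : ℕ) : ℕ := Nat.nth Nat.Prime (i - 1)

/-- The n-th primorial, the product of the first n primes. -/
noncomputable def primor (n : ℕ) : ℕ := ∏ i ∈ Finset.range n, Nat.nth Nat.Prime i

/-- The set defining the Jacobsthal function. -/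
noncomputable def jSet (n : ℕ) : Set ℕ :=
  {m | ∀ a : ℤ, ∃ q : ℕ, 1 ≤ q ∧ q ≤ m ∧ Int.gcd (a + q) n = 1}

/-- The Jacobsthal function. -/
noncomputable def j (n : ℕ) : ℕ := sInf (jSet n)

/-- The set defining the paired Jacobsthal function. -/
noncomputable def j2Set (n : ℕ) : Set ℕ :=
  {m | ∀ a b : ℤ, (2 : ℤ) ∣ (b - a) → ∃ q : ℕ, 1 ≤ q ∧ q ≤ m ∧
    Int.gcd (a + q) n = 1 ∧ Int.gcd (b + q) n = 1}

/-- The paired Jacobsthal function. -/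
noncomputable def j2 (n : ℕ) : ℕ := sInf (j2Set n)

/-- The primorial paired Jacobsthal function. -/
noncomputable def h2 (n : ℕ) : ℕ := j2 (primor n)

/-- The radical of n: product of distinct prime divisors. -/
noncomputable def rad (n : ℕ) : ℕ := ∏ p ∈ n.primeFactors, p


lemma primor30 : (∏ i ∈ Finset.range 3, Nat.nth Nat.Prime i) = 30 := by
  have h2 : Nat.nth Nat.Prime 0 = 2 := Nat.nth_prime_zero_eq_two
  have h3 : Nat.nth Nat.Prime 1 = 3 := Nat.nth_prime_one_eq_three
  have h5 : Nat.nth Nat.Prime 2 = 5 := by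
    have hc : Nat.count Nat.Prime 5 = 2 := by decide
    have := Nat.nth_count (p := Nat.Prime) (n := 5) (by norm_num)
    rwa [hc] at this
  rw [Finset.prod_range_succ, Finset.prod_range_succ, Finset.prod_range_one, h2, h3, h5]; norm_num

lemma gcd_iff (a : ℤ) (q : ℕ) :
    Int.gcd (a + q) 30 = 1 ↔ Nat.gcd ((a % 30).toNat + q) 30 = 1 := by
  have h0 : (0:ℤ) ≤ a % 30 := Int.emod_nonneg a (by norm_num)
  have heq : a + q = (((a % 30).toNat + q : ℕ) : ℤ) + 30 * (a / 30) := by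
    push_cast [Int.toNat_of_nonneg h0]
    rw [Int.emod_def]; ring
  rw [heq, ← Int.isCoprime_iff_gcd_eq_one]
  constructor
  · intro h
    have := h.add_mul_left_left (-(a / 30))
    rw [mul_neg, add_neg_cancel_right] at this
    rw [Int.isCoprime_iff_gcd_eq_one] at this
    exact_mod_cast this
  · intro h
    have h' : IsCoprime (((a % 30).toNat + q : ℕ) : ℤ) 30 := by
      rw [Int.isCoprime_iff_gcd_eq_one]; exact_mod_cast h
    simpa [mul_comm] using h'.add_mul_left_left (a / 30)

lemma main_dec : ∀ r s : Fin 30, r.val % 2 = s.val % 2 →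
    ∃ q : Fin 19, 1 ≤ q.val ∧ Nat.gcd (r.val + q.val) 30 = 1 ∧ Nat.gcd (s.val + q.val) 30 = 1 := by
  decide

theorem stmt9 : h2 3 = 18 := by
  have hp : primor 3 = 30 := primor30
  have h18 : (18 : ℕ) ∈ j2Set 30 := by
    intro a b hab
    have h0a : (0:ℤ) ≤ a % 30 := Int.emod_nonneg a (by norm_num)
    have h0b : (0:ℤ) ≤ b % 30 := Int.emod_nonneg b (by norm_num)
    have hra : (a % 30).toNat < 30 := by omega
    have hrb : (b % 30).toNat < 30 := by omega
    have hpar : (a % 30).toNat % 2 = (b % 30).toNat % 2 := by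
      have h1 : a % 30 % 2 = a % 2 := Int.emod_emod_of_dvd a (by norm_num)
      have h2 : b % 30 % 2 = b % 2 := Int.emod_emod_of_dvd b (by norm_num)
      obtain ⟨k, hk⟩ := hab
      omega
    obtain ⟨q, hq1, hga, hgb⟩ := main_dec ⟨(a % 30).toNat, hra⟩ ⟨(b % 30).toNat, hrb⟩ hpar
    exact ⟨q.val, hq1, by omega, (gcd_iff a q.val).2 hga, (gcd_iff b q.val).2 hgb⟩
  have h17 : (17 : ℕ) ∉ j2Set 30 := by
    intro h
    obtain ⟨q, hq1, hq2, hg1, hg2⟩ := h 13 29 (by norm_num)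
    interval_cases q <;> revert hg1 hg2 <;> decide
  have : sInf (j2Set 30) = 18 := by
    refine le_antisymm (Nat.sInf_le h18) (le_csInf ⟨18, h18⟩ ?_)
    intro m hm
    by_contra hlt
    push_neg at hlt
    refine h17 (fun a b hab => ?_)
    obtain ⟨q, h1, h2, h3⟩ := hm a b hab
    exact ⟨q, h1, by omega, h3⟩
  rw [h2, j2, hp, this]
end

section
/- h₂(4) = 30: the smallest m such that for every (a,b) ∈ ℤ² with b − a even there exists q ∈ {1,...,m} with a+q and b+q both coprime to 210, is 30. -/
open Finset

/-! ### Auxiliary machinery -/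

def cop (x : ℕ) : Bool := x % 2 != 0 && x % 3 != 0 && x % 5 != 0 && x % 7 != 0

def chk3 (r t : ℕ) : ℕ → Bool
  | 0 => false
  | q+1 => (cop (r+1+q) && cop (r+1+q+2*t)) || chk3 r t q

def chk2 (r : ℕ) : ℕ → Bool
  | 0 => true
  | t+1 => chk3 r t 30 && chk2 r t

def chk1 : ℕ → Bool
  | 0 => true
  | r+1 => chk2 r 105 && chk1 r

lemma chk3_sound (r t : ℕ) : ∀ n, chk3 r t n = true →
    ∃ q < n, cop (r+1+q) = true ∧ cop (r+1+q+2*t) = true := by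
  intro n
  induction n with
  | zero => simp [chk3]
  | succ m ih =>
    intro h
    rw [chk3, Bool.or_eq_true, Bool.and_eq_true] at h
    rcases h with ⟨h1, h2⟩ | h
    · exact ⟨m, Nat.lt_succ_self m, h1, h2⟩
    · obtain ⟨q, hq, h1, h2⟩ := ih h
      exact ⟨q, Nat.lt_succ_of_lt hq, h1, h2⟩

lemma chk2_sound (r : ℕ) : ∀ n, chk2 r n = true → ∀ t < n, chk3 r t 30 = true := by
  intro n
  induction n with
  | zero => intro _ t ht; omega
  | succ m ih =>
    intro h t ht
    rw [chk2, Bool.and_eq_true] at h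
    rcases Nat.lt_succ_iff_lt_or_eq.mp ht with h' | h'
    · exact ih h.2 t h'
    · subst h'; exact h.1

lemma chk1_sound : ∀ n, chk1 n = true → ∀ r < n, chk2 r 105 = true := by
  intro n
  induction n with
  | zero => intro _ r hr; omega
  | succ m ih =>
    intro h r hr
    rw [chk1, Bool.and_eq_true] at h
    rcases Nat.lt_succ_iff_lt_or_eq.mp hr with h' | h'
    · exact ih h.2 r h'
    · subst h'; exact h.1

set_option maxHeartbeats 8000000 in
set_option maxRecDepth 10000 in
lemma chk1_210 : chk1 210 = true := by decide

lemma key30 : ∀ r < 210, ∀ t < 105, ∃ q < 30,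
    cop (r+1+q) = true ∧ cop (r+1+q+2*t) = true :=
  fun r hr t ht => chk3_sound r t 30 (chk2_sound r 105 (chk1_sound 210 chk1_210 r hr) t ht)

set_option maxRecDepth 2000 in
lemma key29 : ∀ q < 29, ¬(cop (2+q) = true ∧ cop (108+q) = true) := by decide

lemma gcd210_iff (x : ℤ) (r : ℕ) (h : (210:ℤ) ∣ x - r) :
    Int.gcd x 210 = 1 ↔ cop r = true := by
  have hdvd : ∀ p : ℕ, (p:ℤ) ∣ 210 → ((p:ℤ) ∣ x ↔ p ∣ r) := by
    intro p hp
    have h' : (p:ℤ) ∣ x - r := hp.trans h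
    constructor
    · intro hx
      have : (p:ℤ) ∣ (r:ℤ) := by
        have := dvd_sub hx h'; simpa using this
      exact_mod_cast this
    · intro hr
      have : x = (x - r) + r := by ring
      rw [this]; exact dvd_add h' (Int.natCast_dvd_natCast.mpr hr)
  have e : (210:ℤ) = 2 * (3 * (5 * 7)) := by norm_num
  rw [← Int.isCoprime_iff_gcd_eq_one, e, IsCoprime.mul_right_iff,
    IsCoprime.mul_right_iff, IsCoprime.mul_right_iff]
  have c2 : IsCoprime x (2:ℤ) ↔ ¬ (2:ℕ) ∣ r := by
    rw [isCoprime_comm, (Int.prime_two).coprime_iff_not_dvd,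
      show ((2:ℤ) = ((2:ℕ):ℤ)) by norm_num, hdvd 2 (by norm_num)]
  have c3 : IsCoprime x (3:ℤ) ↔ ¬ (3:ℕ) ∣ r := by
    rw [isCoprime_comm, (Int.prime_three).coprime_iff_not_dvd,
      show ((3:ℤ) = ((3:ℕ):ℤ)) by norm_num, hdvd 3 (by norm_num)]
  have c5 : IsCoprime x (5:ℤ) ↔ ¬ (5:ℕ) ∣ r := by
    rw [isCoprime_comm, (by norm_num : Prime (5:ℤ)).coprime_iff_not_dvd,
      show ((5:ℤ) = ((5:ℕ):ℤ)) by norm_num, hdvd 5 (by norm_num)]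
  have c7 : IsCoprime x (7:ℤ) ↔ ¬ (7:ℕ) ∣ r := by
    rw [isCoprime_comm, (by norm_num : Prime (7:ℤ)).coprime_iff_not_dvd,
      show ((7:ℤ) = ((7:ℕ):ℤ)) by norm_num, hdvd 7 (by norm_num)]
  rw [c2, c3, c5, c7]
  simp [cop, Nat.dvd_iff_mod_eq_zero]
  tauto

lemma primor4 : primor 4 = 210 := by
  have h2' : Nat.nth Nat.Prime 0 = 2 := by
    have := Nat.nth_count (p := Nat.Prime) (n := 2) (by norm_num)
    simpa [Nat.count_succ] using this
  have h3 : Nat.nth Nat.Prime 1 = 3 := by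
    have := Nat.nth_count (p := Nat.Prime) (n := 3) (by norm_num)
    simpa [Nat.count_succ] using this
  have h5 : Nat.nth Nat.Prime 2 = 5 := by
    have := Nat.nth_count (p := Nat.Prime) (n := 5) (by norm_num)
    simpa [Nat.count_succ] using this
  have h7 : Nat.nth Nat.Prime 3 = 7 := by
    have := Nat.nth_count (p := Nat.Prime) (n := 7) (by norm_num)
    simpa [Nat.count_succ] using this
  simp [primor, Finset.prod_range_succ, h2', h3, h5, h7]

theorem stmt10 : h2 4 = 30 := by
  have mem30 : 30 ∈ j2Set 210 := by
    intro a b hpar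
    set r : ℕ := (a % 210).toNat with hr
    set t : ℕ := (((b - a) / 2) % 105).toNat with ht
    have ha : (0:ℤ) ≤ a % 210 := Int.emod_nonneg a (by norm_num)
    have ha2 : a % 210 < 210 := Int.emod_lt_of_pos a (by norm_num)
    obtain ⟨k, hk⟩ := hpar
    have hkt : (0:ℤ) ≤ k % 105 := Int.emod_nonneg k (by norm_num)
    have hkt2 : k % 105 < 105 := Int.emod_lt_of_pos k (by norm_num)
    have hdiv : (b - a) / 2 = k := by omega
    have hrlt : r < 210 := by omega
    have htlt : t < 105 := by omega
    obtain ⟨q, hq, hc1, hc2⟩ := key30 r hrlt t htlt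
    refine ⟨q + 1, by omega, by omega, ?_, ?_⟩ <;> push_cast
    · rw [gcd210_iff (a + (q+1)) (r + 1 + q)]
      · exact hc1
      · have : a = 210 * (a / 210) + (r:ℤ) := by
          rw [hr]; rw [Int.toNat_of_nonneg ha]; omega
        push_cast
        refine ⟨a / 210, by omega⟩
    · rw [gcd210_iff (b + (q+1)) (r + 1 + q + 2*t)]
      · exact hc2
      · have e1 : a = 210 * (a / 210) + (r:ℤ) := by
          rw [hr]; rw [Int.toNat_of_nonneg ha]; omega
        have e2 : k = 105 * (k / 105) + (t:ℤ) := by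
          rw [ht, hdiv]; rw [Int.toNat_of_nonneg hkt]; omega
        push_cast
        refine ⟨a / 210 + k / 105, by omega⟩
  have low : ∀ m ∈ j2Set 210, 30 ≤ m := by
    intro m hm
    by_contra hlt
    push_neg at hlt
    obtain ⟨q, hq1, hq2, hg1, hg2⟩ := hm 1 107 (by norm_num)
    have hq29 : q - 1 < 29 := by omega
    apply key29 (q - 1) hq29
    constructor
    · rw [← gcd210_iff ((1:ℤ) + q) (2 + (q-1))]
      · exact hg1
      · push_cast [Nat.cast_sub hq1]; ring_nf; exact ⟨0, by ring⟩
    · rw [← gcd210_iff ((107:ℤ) + q) (108 + (q-1))]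
      · exact hg2
      · push_cast [Nat.cast_sub hq1]; ring_nf; exact ⟨0, by ring⟩
  have hj : j2 210 = 30 := le_antisymm (Nat.sInf_le mem30) (le_csInf ⟨30, mem30⟩ low)
  rw [h2, primor4, hj]
end

section
/- For every n ≥ 2, h₂(n) is even. -/
open Finset

lemma two_dvd_primor {n : ℕ} (hn : 1 ≤ n) : 2 ∣ primor n := by
  have h0 : (0 : ℕ) ∈ Finset.range n := Finset.mem_range.mpr hn
  have h2 : Nat.nth Nat.Prime 0 = 2 := Nat.nth_prime_zero_eq_two
  rw [primor]
  exact h2 ▸ Finset.dvd_prod_of_mem _ h0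

theorem stmt18 (n : ℕ) (hn : 2 ≤ n) : 2 ∣ h2 n := by
  by_contra hodd
  set m := h2 n with hm
  have hne : (j2Set (primor n)).Nonempty := by
    by_contra h
    rw [Set.not_nonempty_iff_eq_empty] at h
    have : m = 0 := by rw [hm, h2, j2, h, Nat.sInf_empty]
    omega
  have hmem : m ∈ j2Set (primor n) := Nat.sInf_mem hne
  have hP2 : (2 : ℤ) ∣ (primor n : ℤ) :=
    Int.natCast_dvd_natCast.mpr (two_dvd_primor (by omega))
  have hmem' : m - 1 ∈ j2Set (primor n) := by
    intro a b hab
    rcases Int.even_or_odd a with ⟨k, hk⟩ | ⟨k, hk⟩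
    · -- a even: shift to a-1, b-1
      obtain ⟨q, hq1, hqm, hga, hgb⟩ := hmem (a - 1) (b - 1) (by omega)
      have hnd : ¬ (2 : ℤ) ∣ (a - 1 + q) := by
        intro h
        have := Int.dvd_gcd h hP2
        rw [hga] at this
        norm_num at this
      have hq2 : 2 ≤ q := by omega
      have hcast : ((q - 1 : ℕ) : ℤ) = (q : ℤ) - 1 := by
        push_cast [Nat.cast_sub (by omega : 1 ≤ q)]; ring
      refine ⟨q - 1, by omega, by omega, ?_, ?_⟩
      · have h1 : (a + ((q - 1 : ℕ) : ℤ)) = (a - 1 + q) := by rw [hcast]; ring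
        rw [h1]; exact hga
      · have h1 : (b + ((q - 1 : ℕ) : ℤ)) = (b - 1 + q) := by rw [hcast]; ring
        rw [h1]; exact hgb
    · -- a odd: q must be even, so q ≠ m
      obtain ⟨q, hq1, hqm, hga, hgb⟩ := hmem a b hab
      have hnd : ¬ (2 : ℤ) ∣ (a + q) := by
        intro h
        have := Int.dvd_gcd h hP2
        rw [hga] at this
        norm_num at this
      exact ⟨q, hq1, by omega, hga, hgb⟩
  have hle : m ≤ m - 1 := by
    rw [hm, h2, j2]
    exact Nat.sInf_le hmem'
  omega
end
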